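/- Define the relation ≤' on [0,1] ∪ {u} (u ∉ [0,1]) by: x ≤' y iff x = u, or x = y, or y < x ≤ 1/2, or 1/2 ≤ x < y (with <, ≤ the usual real order on [0,1]). Then ≤' is a partial order on [0,1] ∪ {u} with least element u; every nonempty subset X of [0,1] ∪ {u} has a greatest lower bound with respect to ≤', given by: u if u ∈ X; inf X if X ⊆ [1/2, 1]; sup X if X ⊆ [0, 1/2]; and 1/2 otherwise; and every chain in ([0,1] ∪ {u}, ≤') has a least upper bound. Hence ([0,1] ∪ {u}, ≤') is a complete partial order. -/

import Mathlib

/-- The unit interval `[0,1]`; the carrier of the refined ordering is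
`[0,1] ∪ {u}`, modeled as `Option ↥I01` with `none` playing the role of `u`. -/
abbrev I01 : Set ℝ := Set.Icc (0:ℝ) 1

/-- The refined information ordering `≤'` on `[0,1] ∪ {u}`:
`x ≤' y` iff `x = u`, or `x = y`, or `y < x ≤ 1/2`, or `1/2 ≤ x < y`
(with `<`, `≤` the usual real order). -/
def le' (a b : Option ↥I01) : Prop :=
  a = none ∨ ∃ x y : ↥I01, a = some x ∧ b = some y ∧
    (x = y ∨ ((y:ℝ) < x ∧ (x:ℝ) ≤ 1/2) ∨ (1/2 ≤ (x:ℝ) ∧ (x:ℝ) < y))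

/-- The set of real values occurring in a subset of `[0,1] ∪ {u}`. -/
def vals (X : Set (Option ↥I01)) : Set ℝ :=
  {y : ℝ | ∃ z : ↥I01, (z:ℝ) = y ∧ some z ∈ X}

/-- greatest lower bound with respect to `≤'` -/
def IsGLB' (X : Set (Option ↥I01)) (g : Option ↥I01) : Prop :=
  (∀ x ∈ X, le' g x) ∧ ∀ b : Option ↥I01, (∀ x ∈ X, le' b x) → le' b g

/-- least upper bound with respect to `≤'` -/
def IsLUB' (X : Set (Option ↥I01)) (g : Option ↥I01) : Prop :=
  (∀ x ∈ X, le' x g) ∧ ∀ b : Option ↥I01, (∀ x ∈ X, le' x b) → le' g b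

/-- The real version of the ordering on values. -/
def R (a b : ℝ) : Prop := a = b ∨ (b < a ∧ a ≤ 1/2) ∨ (1/2 ≤ a ∧ a < b)

lemma le'_some_iff (x y : ↥I01) : le' (some x) (some y) ↔ R (x:ℝ) (y:ℝ) := by
  constructor
  · rintro (h | ⟨x', y', hx, hy, h⟩)
    · exact absurd h (Option.some_ne_none x)
    · rw [Option.some_inj] at hx hy
      subst hx; subst hy
      rcases h with rfl | h
      · exact Or.inl rfl
      · exact Or.inr h
  · rintro (h | h)
    · exact Or.inr ⟨x, y, rfl, rfl, Or.inl (Subtype.ext h)⟩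
    · exact Or.inr ⟨x, y, rfl, rfl, Or.inr h⟩

lemma not_le'_some_none (x : ↥I01) : ¬ le' (some x) none := by
  rintro (h | ⟨x', y', hx, hy, _⟩)
  · exact Option.some_ne_none x h
  · exact Option.some_ne_none y' hy.symm

lemma R_trans {a b c : ℝ} (h1 : R a b) (h2 : R b c) : R a c := by
  unfold R at *
  rcases h1 with rfl | ⟨h1a, h1b⟩ | ⟨h1a, h1b⟩ <;>
    rcases h2 with rfl | ⟨h2a, h2b⟩ | ⟨h2a, h2b⟩ <;>
      first
      | (left; linarith)
      | (right; left; constructor <;> linarith)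
      | (right; right; constructor <;> linarith)

lemma R_antisymm {a b : ℝ} (h1 : R a b) (h2 : R b a) : a = b := by
  unfold R at *
  rcases h1 with rfl | ⟨h1a, h1b⟩ | ⟨h1a, h1b⟩ <;>
    rcases h2 with h2 | ⟨h2a, h2b⟩ | ⟨h2a, h2b⟩ <;> linarith

lemma R_half (a : ℝ) : R (1/2) a := by
  rcases lt_trichotomy a (1/2) with h | h | h
  · exact Or.inr (Or.inl ⟨h, le_refl _⟩)
  · exact Or.inl h.symm
  · exact Or.inr (Or.inr ⟨le_refl _, h⟩)

/-- `≤'` is a partial order on `[0,1] ∪ {u}` with least element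
`u`; every nonempty subset `X` has a greatest lower bound, given by `u` if
`u ∈ X`, by `inf X` if `X ⊆ [1/2, 1]`, by `sup X` if `X ⊆ [0, 1/2]`, and by
`1/2` otherwise; and every chain has a least upper bound. Hence
`([0,1] ∪ {u}, ≤')` is a complete partial order. -/
theorem refined_ordering_is_cpo :
    (∀ a : Option ↥I01, le' a a) ∧
    (∀ a b : Option ↥I01, le' a b → le' b a → a = b) ∧
    (∀ a b c : Option ↥I01, le' a b → le' b c → le' a c) ∧
    (∀ a : Option ↥I01, le' none a) ∧
    (∀ X : Set (Option ↥I01), X.Nonempty →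
      ∃ g : Option ↥I01, IsGLB' X g ∧
        (none ∈ X → g = none) ∧
        (none ∉ X → (∀ y ∈ vals X, 1/2 ≤ y) →
          ∃ z : ↥I01, g = some z ∧ (z:ℝ) = sInf (vals X)) ∧
        (none ∉ X → (∀ y ∈ vals X, y ≤ 1/2) →
          ∃ z : ↥I01, g = some z ∧ (z:ℝ) = sSup (vals X)) ∧
        (none ∉ X → ¬ (∀ y ∈ vals X, 1/2 ≤ y) → ¬ (∀ y ∈ vals X, y ≤ 1/2) →
          ∃ z : ↥I01, g = some z ∧ (z:ℝ) = 1/2)) ∧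
    (∀ X : Set (Option ↥I01), IsChain le' X →
      ∃ g : Option ↥I01, IsLUB' X g) := by
  refine ⟨?_, ?_, ?_, ?_, ?_, ?_⟩
  · -- reflexivity
    rintro (_ | x)
    · exact Or.inl rfl
    · exact (le'_some_iff x x).mpr (Or.inl rfl)
  · -- antisymmetry
    rintro (_ | x) (_ | y) h1 h2
    · rfl
    · exact absurd h2 (not_le'_some_none y)
    · exact absurd h1 (not_le'_some_none x)
    · rw [le'_some_iff] at h1 h2
      exact congrArg some (Subtype.ext (R_antisymm h1 h2))
  · -- transitivity
    rintro (_ | x) (_ | y) (_ | z) h1 h2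
    · exact Or.inl rfl
    · exact Or.inl rfl
    · exact Or.inl rfl
    · exact Or.inl rfl
    · exact absurd h1 (not_le'_some_none x)
    · exact absurd h1 (not_le'_some_none x)
    · exact absurd h2 (not_le'_some_none y)
    · rw [le'_some_iff] at h1 h2 ⊢
      exact R_trans h1 h2
  · -- least element
    intro a; exact Or.inl rfl
  · -- greatest lower bounds
    intro X hX
    by_cases hn : (none : Option ↥I01) ∈ X
    · refine ⟨none, ⟨fun x _ => Or.inl rfl, fun b hb => hb none hn⟩,
        fun _ => rfl, fun h => absurd hn h, fun h => absurd hn h, fun h => absurd hn h⟩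
    · -- none ∉ X
      have hvne : (vals X).Nonempty := by
        obtain ⟨a, ha⟩ := hX
        rcases a with _ | z
        · exact absurd ha hn
        · exact ⟨(z:ℝ), z, rfl, ha⟩
      have hsub : vals X ⊆ Set.Icc (0:ℝ) 1 := by
        rintro y ⟨z, rfl, hz⟩; exact z.2
      have hbddA : BddAbove (vals X) := ⟨1, fun y hy => (hsub hy).2⟩
      have hbddB : BddBelow (vals X) := ⟨0, fun y hy => (hsub hy).1⟩
      obtain ⟨v0, hv0⟩ := hvne
      have hvne : (vals X).Nonempty := ⟨v0, hv0⟩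
      by_cases hge : ∀ y ∈ vals X, 1/2 ≤ y
      · -- all values ≥ 1/2 : glb is the infimum
        have hmem : sInf (vals X) ∈ I01 :=
          ⟨le_csInf hvne (fun y hy => (hsub hy).1), csInf_le_of_le hbddB hv0 (hsub hv0).2⟩
        have hhalf : (1:ℝ)/2 ≤ sInf (vals X) := le_csInf hvne hge
        refine ⟨some ⟨sInf (vals X), hmem⟩, ⟨?_, ?_⟩, fun h => absurd h hn,
          fun _ _ => ⟨_, rfl, rfl⟩, fun _ hle => ⟨_, rfl, ?_⟩, fun _ h => absurd hge h⟩
        · rintro (_ | z) hx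
          · exact absurd hx hn
          · rw [le'_some_iff]
            have hz : (z:ℝ) ∈ vals X := ⟨z, rfl, hx⟩
            rcases eq_or_lt_of_le (csInf_le hbddB hz) with h | h
            · exact Or.inl h
            · exact Or.inr (Or.inr ⟨hhalf, h⟩)
        · rintro (_ | w) hb
          · exact Or.inl rfl
          · have key : ∀ v ∈ vals X, R (w:ℝ) v := by
              rintro v ⟨z, rfl, hzX⟩
              exact (le'_some_iff _ _).mp (hb _ hzX)
            have hwhalf : (1:ℝ)/2 ≤ w := by
              rcases key v0 hv0 with h | ⟨h1, h2⟩ | ⟨h1, h2⟩ <;>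
                [skip; skip; skip] <;> first | linarith [hge v0 hv0] | linarith
            have hwle : ∀ v ∈ vals X, (w:ℝ) ≤ v := by
              intro v hv
              rcases key v hv with h | ⟨h1, h2⟩ | ⟨h1, h2⟩ <;>
                first | linarith [hge v hv] | linarith
            have hw : (w:ℝ) ≤ sInf (vals X) := le_csInf hvne hwle
            rw [le'_some_iff]
            rcases eq_or_lt_of_le hw with h | h
            · exact Or.inl h
            · exact Or.inr (Or.inr ⟨hwhalf, h⟩)
        · -- both conditions : sInf = sSup
          have h1 : sSup (vals X) ≤ 1/2 := csSup_le hvne hle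
          have h3 : sInf (vals X) ≤ sSup (vals X) := csInf_le_csSup hvne hbddB hbddA
          show sInf (vals X) = sSup (vals X)
          linarith
      · by_cases hle : ∀ y ∈ vals X, y ≤ 1/2
        · -- all values ≤ 1/2 : glb is the supremum
          have hmem : sSup (vals X) ∈ I01 :=
            ⟨le_csSup_of_le hbddA hv0 (hsub hv0).1, csSup_le hvne (fun y hy => (hsub hy).2)⟩
          have hhalf : sSup (vals X) ≤ 1/2 := csSup_le hvne hle
          refine ⟨some ⟨sSup (vals X), hmem⟩, ⟨?_, ?_⟩, fun h => absurd h hn,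
            fun _ h => absurd h hge, fun _ _ => ⟨_, rfl, rfl⟩, fun _ _ h => absurd hle h⟩
          · rintro (_ | z) hx
            · exact absurd hx hn
            · rw [le'_some_iff]
              have hz : (z:ℝ) ∈ vals X := ⟨z, rfl, hx⟩
              rcases eq_or_lt_of_le (le_csSup hbddA hz) with h | h
              · exact Or.inl h.symm
              · exact Or.inr (Or.inl ⟨h, hhalf⟩)
          · rintro (_ | w) hb
            · exact Or.inl rfl
            · have key : ∀ v ∈ vals X, R (w:ℝ) v := by
                rintro v ⟨z, rfl, hzX⟩
                exact (le'_some_iff _ _).mp (hb _ hzX)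
              -- there is a value strictly below 1/2
              push_neg at hge
              obtain ⟨v1, hv1m, hv1⟩ := hge
              have hw1 : (w:ℝ) ≤ 1/2 := by
                rcases key v1 hv1m with h | ⟨h1, h2⟩ | ⟨h1, h2⟩ <;> linarith
              have hwge : ∀ v ∈ vals X, v ≤ (w:ℝ) := by
                intro v hv
                rcases key v hv with h | ⟨h1, h2⟩ | ⟨h1, h2⟩ <;>
                  first | linarith [hle v hv] | linarith
              have hw : sSup (vals X) ≤ (w:ℝ) := csSup_le hvne hwge
              rw [le'_some_iff]
              rcases eq_or_lt_of_le hw with h | h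
              · exact Or.inl h.symm
              · exact Or.inr (Or.inl ⟨h, hw1⟩)
        · -- mixed : glb is 1/2
          push_neg at hge hle
          obtain ⟨v1, hv1m, hv1⟩ := hge
          obtain ⟨v2, hv2m, hv2⟩ := hle
          refine ⟨some ⟨1/2, by norm_num⟩, ⟨?_, ?_⟩, fun h => absurd h hn,
            fun _ h => absurd (h v1 hv1m) (not_le.mpr hv1),
            fun _ h => absurd (h v2 hv2m) (not_le.mpr hv2),
            fun _ _ _ => ⟨_, rfl, rfl⟩⟩
          · rintro (_ | z) hx
            · exact absurd hx hn
            · rw [le'_some_iff]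
              exact R_half _
          · rintro (_ | w) hb
            · exact Or.inl rfl
            · have key : ∀ v ∈ vals X, R (w:ℝ) v := by
                rintro v ⟨z, rfl, hzX⟩
                exact (le'_some_iff _ _).mp (hb _ hzX)
              have hw1 : (w:ℝ) ≤ 1/2 := by
                rcases key v1 hv1m with h | ⟨h1, h2⟩ | ⟨h1, h2⟩ <;> linarith
              have hw2 : (1:ℝ)/2 ≤ w := by
                rcases key v2 hv2m with h | ⟨h1, h2⟩ | ⟨h1, h2⟩ <;> linarith
              rw [le'_some_iff]
              exact Or.inl (by push_cast; linarith)
  · -- chains have least upper bounds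
    intro X hch
    by_cases hvne : (vals X).Nonempty
    · obtain ⟨v0, z0, hz0v, hz0X⟩ := hvne
      subst hz0v
      have hv0 : (z0:ℝ) ∈ vals X := ⟨z0, rfl, hz0X⟩
      have hvne : (vals X).Nonempty := ⟨_, hv0⟩
      have hsub : vals X ⊆ Set.Icc (0:ℝ) 1 := by
        rintro y ⟨z, rfl, hz⟩; exact z.2
      have hbddA : BddAbove (vals X) := ⟨1, fun y hy => (hsub hy).2⟩
      have hbddB : BddBelow (vals X) := ⟨0, fun y hy => (hsub hy).1⟩
      have hcmp : ∀ v1 ∈ vals X, ∀ v2 ∈ vals X, R v1 v2 ∨ R v2 v1 := by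
        rintro v1 ⟨z1, rfl, h1⟩ v2 ⟨z2, rfl, h2⟩
        by_cases hz : (some z1 : Option ↥I01) = some z2
        · rw [Option.some_inj] at hz
          exact Or.inl (Or.inl (by rw [hz]))
        · rcases hch h1 h2 hz with h | h
          · exact Or.inl ((le'_some_iff _ _).mp h)
          · exact Or.inr ((le'_some_iff _ _).mp h)
      by_cases hge : ∀ y ∈ vals X, 1/2 ≤ y
      · -- all values ≥ 1/2 : lub is the supremum
        have hmem : sSup (vals X) ∈ I01 :=
          ⟨le_csSup_of_le hbddA hv0 (hsub hv0).1, csSup_le hvne (fun y hy => (hsub hy).2)⟩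
        refine ⟨some ⟨sSup (vals X), hmem⟩, ?_, ?_⟩
        · rintro (_ | z) hx
          · exact Or.inl rfl
          · rw [le'_some_iff]
            have hz : (z:ℝ) ∈ vals X := ⟨z, rfl, hx⟩
            rcases eq_or_lt_of_le (le_csSup hbddA hz) with h | h
            · exact Or.inl h
            · exact Or.inr (Or.inr ⟨hge _ hz, h⟩)
        · rintro (_ | w) hb
          · exact absurd (hb _ hz0X) (not_le'_some_none z0)
          · have key : ∀ v ∈ vals X, R v (w:ℝ) := by
              rintro v ⟨z, rfl, hzX⟩
              exact (le'_some_iff _ _).mp (hb _ hzX)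
            rw [le'_some_iff]
            by_cases hex : ∃ v ∈ vals X, 1/2 < v
            · obtain ⟨v2, hv2m, hv2⟩ := hex
              have hw : (1:ℝ)/2 < w := by
                rcases key v2 hv2m with h | ⟨h1, h2⟩ | ⟨h1, h2⟩ <;> linarith
              have hlev : ∀ v ∈ vals X, v ≤ (w:ℝ) := by
                intro v hv
                rcases key v hv with h | ⟨h1, h2⟩ | ⟨h1, h2⟩ <;> linarith
              have hs : sSup (vals X) ≤ (w:ℝ) := csSup_le hvne hlev
              have hs2 : (1:ℝ)/2 < sSup (vals X) := lt_of_lt_of_le hv2 (le_csSup hbddA hv2m)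
              rcases eq_or_lt_of_le hs with h | h
              · exact Or.inl h
              · exact Or.inr (Or.inr ⟨le_of_lt hs2, h⟩)
            · push_neg at hex
              have hsup : sSup (vals X) = 1/2 :=
                le_antisymm (csSup_le hvne hex) (le_csSup_of_le hbddA hv0 (hge _ hv0))
              show R (sSup (vals X)) (w:ℝ)
              rw [hsup]
              exact R_half _
      · -- some value < 1/2 : all values ≤ 1/2, lub is the infimum
        push_neg at hge
        obtain ⟨v1, hv1m, hv1⟩ := hge
        have hall : ∀ v ∈ vals X, v ≤ 1/2 := by
          intro v hv
          rcases hcmp v hv v1 hv1m with h | h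
          · rcases h with h | ⟨h1, h2⟩ | ⟨h1, h2⟩ <;> linarith
          · rcases h with h | ⟨h1, h2⟩ | ⟨h1, h2⟩ <;> linarith
        have hmem : sInf (vals X) ∈ I01 :=
          ⟨le_csInf hvne (fun y hy => (hsub hy).1),
            csInf_le_of_le hbddB hv1m (le_trans (hall v1 hv1m) (by norm_num))⟩
        refine ⟨some ⟨sInf (vals X), hmem⟩, ?_, ?_⟩
        · rintro (_ | z) hx
          · exact Or.inl rfl
          · rw [le'_some_iff]
            have hz : (z:ℝ) ∈ vals X := ⟨z, rfl, hx⟩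
            rcases eq_or_lt_of_le (csInf_le hbddB hz) with h | h
            · exact Or.inl h.symm
            · exact Or.inr (Or.inl ⟨h, hall _ hz⟩)
        · rintro (_ | w) hb
          · exact absurd (hb _ hz0X) (not_le'_some_none z0)
          · have key : ∀ v ∈ vals X, R v (w:ℝ) := by
              rintro v ⟨z, rfl, hzX⟩
              exact (le'_some_iff _ _).mp (hb _ hzX)
            have hw1 : (w:ℝ) < 1/2 := by
              rcases key v1 hv1m with h | ⟨h1, h2⟩ | ⟨h1, h2⟩ <;> linarith
            have hwlb : ∀ v ∈ vals X, (w:ℝ) ≤ v := by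
              intro v hv
              rcases key v hv with h | ⟨h1, h2⟩ | ⟨h1, h2⟩ <;> linarith
            have hw : (w:ℝ) ≤ sInf (vals X) := le_csInf hvne hwlb
            have h2 : sInf (vals X) ≤ 1/2 := le_trans (csInf_le hbddB hv1m) (hall v1 hv1m)
            rw [le'_some_iff]
            rcases eq_or_lt_of_le hw with h | h
            · exact Or.inl h.symm
            · exact Or.inr (Or.inl ⟨h, h2⟩)
    · -- vals X is empty : X ⊆ {none}, lub is none
      refine ⟨none, fun x hx => ?_, fun b hb => Or.inl rfl⟩
      rcases x with _ | z
      · exact Or.inl rfl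
      · exact absurd ⟨(z:ℝ), z, rfl, hx⟩ hvne
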